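/- There exists a constant c > 0 such that for every integer n ≥ 2, every deterministic online sorting strategy s for array size n, and every integer 1 ≤ i ≤ n, the following holds: if x is an input of n i.i.d. uniform samples from [0,1] and j is chosen uniformly at random from {1,...,n−1}, independently of x, then Pr[|A(j+1) − A(j)| ≥ 1/(4i)] ≥ c·i/n, where A = A(s,x) is the final array produced by the strategy. -/

import Mathlib

open MeasureTheory
open scoped ENNReal
open scoped Classical

/-- The distribution of `n` i.i.d. uniform samples from `[0,1]`. -/
noncomputable def uniformCube (n : ℕ) : Measure (Fin n → ℝ) :=
  Measure.pi fun _ => (volume : Measure ℝ).restrict (Set.Icc 0 1)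

/-- A deterministic online sorting strategy for array size `n`: upon arrival of the
`(k+1)`-st item, it is placed into cell `place x k`, which depends only on the first
`k+1` items and is distinct from all previously used cells. -/
structure OnlineStrategy (n : ℕ) where
  place : (Fin n → ℝ) → Fin n → Fin n
  online : ∀ x y : Fin n → ℝ, ∀ k : Fin n,
    (∀ i : Fin n, i ≤ k → x i = y i) → place x k = place y k
  inj : ∀ x : Fin n → ℝ, Function.Injective (place x)
  meas : ∀ k : Fin n, Measurable fun x => place x k

/-- The final array produced by the strategy (cells indexed `0,…,n-1`):
cell `j` holds the item inserted at the unique time `k` with `place x k = j`. -/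
noncomputable def strategyArr {n : ℕ} (S : OnlineStrategy n) (x : Fin n → ℝ) (j : ℕ) : ℝ :=
  if h : j < n then
    haveI : Nonempty (Fin n) := ⟨⟨j, h⟩⟩
    x (Function.invFun (S.place x) ⟨j, h⟩)
  else 0

/-- The cost: the sum of absolute differences between adjacent cells. -/
noncomputable def strategyCost {n : ℕ} (S : OnlineStrategy n) (x : Fin n → ℝ) : ℝ :=
  ∑ j ∈ Finset.range (n - 1), |strategyArr S x (j + 1) - strategyArr S x j|

/-- The time (0-indexed, in `{0,…,n-1}`) at which cell `j` is filled, i.e. the unique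
`k` with `place x k = j`. (Cell `j` out of range gets the junk value `0`.) -/
noncomputable def fillTime {n : ℕ} (S : OnlineStrategy n) (x : Fin n → ℝ) (j : ℕ) : ℕ :=
  if h : j < n then
    haveI : Nonempty (Fin n) := ⟨⟨j, h⟩⟩
    Fin.val (Function.invFun (S.place x) ⟨j, h⟩)
  else 0

/-- The uniform distribution on `Fin m`. -/
noncomputable def uniformFin (m : ℕ) : MeasureTheory.Measure (Fin m) :=
  (m : ℝ≥0∞)⁻¹ • MeasureTheory.Measure.count

namespace OSP

variable {n : ℕ}

noncomputable def pinv (S : OnlineStrategy n) (hn : 0 < n) (x : Fin n → ℝ) : Fin n → Fin n :=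
  haveI : Nonempty (Fin n) := ⟨⟨0, hn⟩⟩
  Function.invFun (S.place x)

lemma place_surj (S : OnlineStrategy n) (x : Fin n → ℝ) : Function.Surjective (S.place x) :=
  Finite.injective_iff_surjective.mp (S.inj x)

lemma place_pinv (S : OnlineStrategy n) (hn : 0 < n) (x : Fin n → ℝ) (j : Fin n) :
    S.place x (pinv S hn x j) = j := by
  haveI : Nonempty (Fin n) := ⟨⟨0, hn⟩⟩
  exact Function.invFun_eq (place_surj S x j)

lemma pinv_place (S : OnlineStrategy n) (hn : 0 < n) (x : Fin n → ℝ) (k : Fin n) :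
    pinv S hn x (S.place x k) = k := by
  haveI : Nonempty (Fin n) := ⟨⟨0, hn⟩⟩
  exact Function.leftInverse_invFun (S.inj x) k

lemma strategyArr_eq (S : OnlineStrategy n) (hn : 0 < n) (x : Fin n → ℝ) (j : ℕ) (h : j < n) :
    strategyArr S x j = x (pinv S hn x ⟨j, h⟩) := by
  rw [strategyArr, dif_pos h]; rfl

lemma card_filter_lt (m : ℕ) (h : m ≤ n) :
    ((Finset.univ : Finset (Fin n)).filter (fun k => k.1 < m)).card = m := by
  have : ((Finset.univ : Finset (Fin n)).filter (fun k => k.1 < m)).card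
      = (Finset.range m).card := by
    refine Finset.card_bij' (fun k _ => k.1)
      (fun a ha => ⟨a, lt_of_lt_of_le (Finset.mem_range.mp ha) h⟩) ?_ ?_ ?_ ?_
    · intro a ha; simpa using (Finset.mem_filter.mp ha).2
    · intro a ha; simpa using Finset.mem_range.mp ha
    · intro a ha; rfl
    · intro a ha; rfl
  simpa using this

lemma card_filter_ge (m : ℕ) (h : m ≤ n) :
    ((Finset.univ : Finset (Fin n)).filter (fun k => m ≤ k.1)).card = n - m := by
  have e : ((Finset.univ : Finset (Fin n)).filter (fun k => m ≤ k.1))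
      = Finset.univ \ ((Finset.univ : Finset (Fin n)).filter (fun k => k.1 < m)) := by
    ext k; simp [not_lt]
  rw [e, Finset.card_sdiff_of_subset (Finset.filter_subset _ _), card_filter_lt m h,
    Finset.card_univ, Fintype.card_fin]

noncomputable def badSet (S : OnlineStrategy n) (i : ℕ) (t : Fin n) : Set (Fin n → ℝ) :=
  ⋃ (k : Fin n) (e : Fin n),
    {x | (k.1 < t.1 ∧ ((S.place x k).1 = e.1 + 1 ∨ e.1 = (S.place x k).1 + 1) ∧
          (∀ k' : Fin n, k'.1 < t.1 → S.place x k' ≠ e)) ∧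
         x t ∈ Set.Ioo (x k - 1/(4*(i:ℝ))) (x k + 1/(4*(i:ℝ)))}

lemma mem_badSet_iff (S : OnlineStrategy n) (i : ℕ) (t : Fin n) (x : Fin n → ℝ) :
    x ∈ badSet S i t ↔ ∃ k e : Fin n,
      ((k.1 < t.1 ∧ ((S.place x k).1 = e.1 + 1 ∨ e.1 = (S.place x k).1 + 1) ∧
          (∀ k' : Fin n, k'.1 < t.1 → S.place x k' ≠ e)) ∧
       x t ∈ Set.Ioo (x k - 1/(4*(i:ℝ))) (x k + 1/(4*(i:ℝ)))) := by
  simp [badSet]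

lemma key_count (S : OnlineStrategy n) (hn : 2 ≤ n) (i L : ℕ) (hLn : L ≤ n) (x : Fin n → ℝ) :
    L ≤ 2 * ((Finset.range (n-1)).filter (fun j =>
            1/(4*(i:ℝ)) ≤ |strategyArr S x (j+1) - strategyArr S x j|)).card
      + 4 * (Finset.univ.filter (fun t : Fin n => n - L ≤ t.1 ∧ x ∈ badSet S i t)).card := by
  have h0 : 0 < n := by omega
  have hQP : ∀ k, pinv S h0 x (S.place x k) = k := fun k => pinv_place S h0 x k
  have hPQ : ∀ j, S.place x (pinv S h0 x j) = j := fun j => place_pinv S h0 x j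
  set Big := (Finset.range (n-1)).filter (fun j =>
      1/(4*(i:ℝ)) ≤ |strategyArr S x (j+1) - strategyArr S x j|) with hBig
  set BadT := (Finset.univ.filter (fun t : Fin n => n - L ≤ t.1 ∧ x ∈ badSet S i t)) with hBadT
  set BadP := ((Finset.range (n-1)).filter (fun j => ∃ t : Fin n,
      (n - L ≤ t.1 ∧ x ∈ badSet S i t) ∧ ((S.place x t).1 = j ∨ (S.place x t).1 = j + 1)))
    with hBadP
  set K := (Finset.univ.filter (fun k : Fin n => n - L ≤ k.1)) with hK
  set g : Fin n → ℕ := fun k => min (S.place x k).1 (n-2) with hg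
  have hKcard : K.card = L := by
    rw [hK, card_filter_ge (n - L) (by omega)]; omega
  have h2 : K.card ≤ 2 * (K.image g).card := by
    apply Finset.card_le_mul_card_image
    intro v hv
    obtain ⟨k0, _, hk0⟩ := Finset.mem_image.mp hv
    have hv2 : v ≤ n - 2 := by rw [← hk0]; exact min_le_right _ _
    have hvn : v < n := by omega
    have hn1 : n - 1 < n := by omega
    have hsub : (K.filter (fun a => g a = v)) ⊆
        {pinv S h0 x ⟨v, hvn⟩, pinv S h0 x ⟨n-1, hn1⟩} := by
      intro k hk
      have hgk : g k = v := (Finset.mem_filter.mp hk).2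
      rcases le_or_gt (S.place x k).1 (n-2) with h | h
      · have hval : (S.place x k).1 = v := by rw [← hgk]; simp [hg, min_eq_left h]
        have h1 : S.place x k = ⟨v, hvn⟩ := Fin.ext hval
        have h2 : k = pinv S h0 x ⟨v, hvn⟩ := by rw [← h1, hQP]
        simp [h2]
      · have h1 : S.place x k = ⟨n-1, hn1⟩ :=
          Fin.ext (show (S.place x k).1 = n - 1 by have := (S.place x k).isLt; omega)
        have h2 : k = pinv S h0 x ⟨n-1, hn1⟩ := by rw [← h1, hQP]
        simp [h2]
    calc (K.filter (fun a => g a = v)).card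
        ≤ ({pinv S h0 x ⟨v, hvn⟩, pinv S h0 x ⟨n-1, hn1⟩} : Finset (Fin n)).card :=
          Finset.card_le_card hsub
      _ ≤ 2 := (Finset.card_insert_le _ _).trans (by simp)
  have h3 : K.image g ⊆ Big ∪ BadP := by
    intro v hv
    obtain ⟨k, hkK, rfl⟩ := Finset.mem_image.mp hv
    have hkL : n - L ≤ k.1 := by
      have := Finset.mem_filter.mp hkK; exact this.2
    have hjle : g k ≤ n - 2 := min_le_right _ _
    have hjr : g k ∈ Finset.range (n-1) := Finset.mem_range.mpr (by omega)
    have hjn : g k < n := by omega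
    have hj1n : g k + 1 < n := by omega
    have hcd : ∃ d : Fin n, d ≠ S.place x k ∧
        ((S.place x k).1 = d.1 + 1 ∨ d.1 = (S.place x k).1 + 1) ∧
        (((⟨g k, hjn⟩ : Fin n) = S.place x k ∧ (⟨g k + 1, hj1n⟩ : Fin n) = d) ∨
         ((⟨g k, hjn⟩ : Fin n) = d ∧ (⟨g k + 1, hj1n⟩ : Fin n) = S.place x k)) := by
      rcases le_or_gt (S.place x k).1 (n-2) with h | h
      · have hfix : g k = (S.place x k).1 := by rw [hg]; simp [min_eq_left h]
        refine ⟨⟨g k + 1, hj1n⟩, ?_, Or.inr (by simp [hfix]), Or.inl ⟨Fin.ext hfix, rfl⟩⟩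
        intro hdc
        have := congrArg Fin.val hdc
        simp [hfix] at this
      · have hc1 : (S.place x k).1 = n - 1 := by have := (S.place x k).isLt; omega
        have hjc : g k = n - 2 := by rw [hg]; simp [min_eq_right (le_of_lt h)]
        refine ⟨⟨g k, hjn⟩, ?_, Or.inl (by simp [hc1, hjc]; omega),
          Or.inr ⟨rfl, Fin.ext (by simp [hc1, hjc]; omega)⟩⟩
        intro hdc
        have := congrArg Fin.val hdc
        simp [hc1, hjc] at this
        omega
    obtain ⟨d, hdc, hadj, hcells⟩ := hcd
    by_cases hbig : 1/(4*(i:ℝ)) ≤ |strategyArr S x (g k + 1) - strategyArr S x (g k)|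
    · exact Finset.mem_union_left _ (Finset.mem_filter.mpr ⟨hjr, hbig⟩)
    push_neg at hbig
    have habs : |x (pinv S h0 x d) - x k| < 1/(4*(i:ℝ)) := by
      have eA : strategyArr S x (g k) = x (pinv S h0 x ⟨g k, hjn⟩) :=
        strategyArr_eq S h0 x (g k) hjn
      have eB : strategyArr S x (g k + 1) = x (pinv S h0 x ⟨g k + 1, hj1n⟩) :=
        strategyArr_eq S h0 x (g k + 1) hj1n
      rcases hcells with ⟨h1, h2⟩ | ⟨h1, h2⟩
      · rw [eA, eB, h1, h2, hQP] at hbig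
        exact hbig
      · rw [eA, eB, h1, h2, hQP] at hbig
        rw [abs_sub_comm]
        exact hbig
    have hcOrBase : (S.place x k).1 = g k ∨ (S.place x k).1 = g k + 1 := by
      rcases hcells with ⟨h1, _⟩ | ⟨_, h2⟩
      · left; exact (congrArg Fin.val h1).symm
      · right; exact (congrArg Fin.val h2).symm
    have hdOrBase : d.1 = g k ∨ d.1 = g k + 1 := by
      rcases hcells with ⟨_, h2⟩ | ⟨h1, _⟩
      · right; exact (congrArg Fin.val h2).symm
      · left; exact (congrArg Fin.val h1).symm
    have hQdk : pinv S h0 x d ≠ k := by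
      intro h
      apply hdc
      rw [← hPQ d, h]
    have hQdkv : (pinv S h0 x d).1 ≠ k.1 := fun h => hQdk (Fin.ext h)
    have hIoo1 := abs_lt.mp habs
    rcases lt_or_gt_of_ne hQdkv with hlt | hgt
    · -- earlier cell is Q d, the pair is finalized at time k
      refine Finset.mem_union_right _ (Finset.mem_filter.mpr ⟨hjr, ⟨k, ⟨⟨hkL, ?_⟩, hcOrBase⟩⟩⟩)
      rw [mem_badSet_iff]
      refine ⟨pinv S h0 x d, S.place x k, ⟨⟨hlt, ?_, ?_⟩, ?_⟩⟩
      · rw [hPQ]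
        tauto
      · intro k'' hk'' hpk''
        have : k'' = k := S.inj x hpk''
        omega
      · exact Set.mem_Ioo.mpr ⟨by linarith [hIoo1.1, hIoo1.2], by linarith [hIoo1.1, hIoo1.2]⟩
    · -- earlier cell is the one filled at k; the pair is finalized at time (pinv S h0 x d)
      refine Finset.mem_union_right _ (Finset.mem_filter.mpr
        ⟨hjr, ⟨pinv S h0 x d, ⟨⟨by omega, ?_⟩, by rw [hPQ]; tauto⟩⟩⟩)
      rw [mem_badSet_iff]
      refine ⟨k, d, ⟨⟨hgt, by tauto, ?_⟩, ?_⟩⟩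
      · intro k'' hk'' hpk''
        have : k'' = pinv S h0 x d := by rw [← hQP k'', hpk'']
        omega
      · exact Set.mem_Ioo.mpr ⟨by linarith [hIoo1.1, hIoo1.2], by linarith [hIoo1.1, hIoo1.2]⟩
  have h4 : BadP.card ≤ 2 * BadT.card := by
    have hsub : BadP ⊆ BadT.biUnion (fun t => {(S.place x t).1, (S.place x t).1 - 1}) := by
      intro j hj
      obtain ⟨hjr, t, htprop, hcor⟩ := Finset.mem_filter.mp hj
      refine Finset.mem_biUnion.mpr ⟨t, Finset.mem_filter.mpr ⟨Finset.mem_univ _, htprop⟩, ?_⟩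
      simp only [Finset.mem_insert, Finset.mem_singleton]
      omega
    calc BadP.card ≤ _ := Finset.card_le_card hsub
      _ ≤ ∑ t ∈ BadT, ({(S.place x t).1, (S.place x t).1 - 1} : Finset ℕ).card :=
          Finset.card_biUnion_le
      _ ≤ ∑ t ∈ BadT, 2 := Finset.sum_le_sum (fun t _ => (Finset.card_insert_le _ _).trans (by simp))
      _ = 2 * BadT.card := by rw [Finset.sum_const, smul_eq_mul, mul_comm]
  have h5 : (K.image g).card ≤ Big.card + BadP.card :=
    (Finset.card_le_card h3).trans (Finset.card_union_le _ _)
  omega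

/-- The distinguished neighbor cell: cell below, or cell `1` for cell `0`. -/
def nbr (hn : 2 ≤ n) (e : Fin n) : Fin n :=
  if e.1 = 0 then ⟨1, by omega⟩ else ⟨e.1 - 1, by have := e.isLt; omega⟩

lemma nbr_ne (hn : 2 ≤ n) (e : Fin n) : nbr hn e ≠ e := by
  intro h
  have := congrArg Fin.val h
  rw [nbr] at this
  split at this <;> simp_all <;> omega

/-- Bad event for the final step: the final item lands within `1/(4i)` of the value of the
distinguished neighbor of the final cell. -/
noncomputable def badSetLast (S : OnlineStrategy n) (hn : 2 ≤ n) (i : ℕ) : Set (Fin n → ℝ) :=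
  ⋃ (k : Fin n) (e : Fin n),
    {x | (k.1 < n - 1 ∧ (∀ k' : Fin n, k'.1 < n - 1 → S.place x k' ≠ e) ∧
          S.place x k = nbr hn e) ∧
         x ⟨n-1, by omega⟩ ∈ Set.Ioo (x k - 1/(4*(i:ℝ))) (x k + 1/(4*(i:ℝ)))}

lemma last_count (S : OnlineStrategy n) (hn : 2 ≤ n) (i : ℕ) (x : Fin n → ℝ)
    (hx : x ∉ badSetLast S hn i) :
    ∃ j ∈ Finset.range (n-1), 1/(4*(i:ℝ)) ≤ |strategyArr S x (j+1) - strategyArr S x j| := by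
  have h0 : 0 < n := by omega
  set tN : Fin n := ⟨n-1, by omega⟩ with htN
  set c : Fin n := S.place x tN with hc
  set d : Fin n := nbr hn c with hd
  set k : Fin n := pinv S h0 x d with hk
  have hpk : S.place x k = d := place_pinv S h0 x d
  have hdc : d ≠ c := nbr_ne hn c
  have hktN : k ≠ tN := by
    intro h
    apply hdc
    rw [← hpk, h, ← hc]
  have hklt : k.1 < n - 1 := by
    have h1 := k.isLt
    have h2 : k.1 ≠ n - 1 := fun h => hktN (Fin.ext h)
    omega
  have hempty : ∀ k' : Fin n, k'.1 < n - 1 → S.place x k' ≠ c := by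
    intro k' hk' hpc
    have : k' = tN := S.inj x (by rw [hpc, hc])
    rw [this] at hk'
    simp [htN] at hk'
  have hnoIoo : x tN ∉ Set.Ioo (x k - 1/(4*(i:ℝ))) (x k + 1/(4*(i:ℝ))) := by
    intro hIoo
    apply hx
    rw [badSetLast]
    refine Set.mem_iUnion.mpr ⟨k, Set.mem_iUnion.mpr ⟨c, ⟨⟨hklt, hempty, by rw [hpk, hd]⟩, hIoo⟩⟩⟩
  have habs : 1/(4*(i:ℝ)) ≤ |x tN - x k| := by
    simp only [Set.mem_Ioo, not_and_or, not_lt] at hnoIoo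
    rcases hnoIoo with h | h
    · exact le_abs.mpr (Or.inr (by linarith))
    · exact le_abs.mpr (Or.inl (by linarith))
  -- the pair (c.1 - 1, c.1) (or (0,1) when c.1 = 0) witnesses the big gap
  have hcval := c.isLt
  have hdval : d.1 = if c.1 = 0 then 1 else c.1 - 1 := by rw [hd, nbr]; split <;> simp
  refine ⟨c.1 - 1, Finset.mem_range.mpr (by split at hdval <;> omega), ?_⟩
  have hAc : strategyArr S x c.1 = x tN := by
    rw [strategyArr_eq S h0 x c.1 c.isLt]
    congr 1
    rw [show (⟨c.1, c.isLt⟩ : Fin n) = c from rfl, hc, pinv_place]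
  have hAd : strategyArr S x d.1 = x k := by
    rw [strategyArr_eq S h0 x d.1 d.isLt, hk]
  by_cases h0c : c.1 = 0
  · have e1 : c.1 - 1 = 0 := by omega
    have e2 : d.1 = 1 := by rw [hdval, if_pos h0c]
    rw [e1, show (0:ℕ)+1 = 1 from rfl, ← e2, hAd, ← h0c, hAc, abs_sub_comm]
    exact habs
  · have e2 : d.1 = c.1 - 1 := by rw [hdval, if_neg h0c]
    rw [← e2, hAd, show d.1 + 1 = c.1 by omega, hAc]
    exact habs

lemma measurable_strategyArr (S : OnlineStrategy n) (j : ℕ) :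
    Measurable (fun x => strategyArr S x j) := by
  rcases lt_or_ge j n with h | h
  · have h0 : 0 < n := by omega
    have heq : (fun x => strategyArr S x j)
        = fun x => ∑ k : Fin n, if S.place x k = ⟨j, h⟩ then x k else 0 := by
      funext x
      rw [strategyArr_eq S h0 x j h]
      have : ∑ k : Fin n, (if S.place x k = ⟨j, h⟩ then x k else 0)
          = x (pinv S h0 x ⟨j, h⟩) := by
        rw [Finset.sum_eq_single (pinv S h0 x ⟨j, h⟩)]
        · rw [if_pos (place_pinv S h0 x _)]
        · intro k _ hk
          rw [if_neg]
          intro hcc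
          exact hk (by rw [← hcc, pinv_place])
        · intro hk; exact absurd (Finset.mem_univ _) hk
      rw [this]
    rw [heq]
    apply Finset.measurable_sum
    intro k _
    exact Measurable.ite ((S.meas k) (measurableSet_singleton _))
      (measurable_pi_apply k) measurable_const
  · have heq : (fun x => strategyArr S x j) = fun _ => (0:ℝ) := by
      funext x; rw [strategyArr, dif_neg (by omega)]
    rw [heq]
    exact measurable_const

lemma measurableSet_bigSet (S : OnlineStrategy n) (i : ℕ) (j : ℕ) :
    MeasurableSet {x : Fin n → ℝ | 1/(4*(i:ℝ)) ≤ |strategyArr S x (j+1) - strategyArr S x j|} :=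
  measurableSet_le measurable_const
    (((measurable_strategyArr S (j+1)).sub (measurable_strategyArr S j)).abs)

lemma measurableSet_place_prop (S : OnlineStrategy n) (k : Fin n) (p : Fin n → Prop) :
    MeasurableSet {x : Fin n → ℝ | p (S.place x k)} := by
  have : {x : Fin n → ℝ | p (S.place x k)} = (fun x => S.place x k) ⁻¹' {d | p d} := rfl
  rw [this]
  exact (S.meas k) ((Set.to_countable _).measurableSet)

lemma measurableSet_badSet (S : OnlineStrategy n) (i : ℕ) (t : Fin n) :
    MeasurableSet (badSet S i t) := by
  apply MeasurableSet.iUnion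
  intro k
  apply MeasurableSet.iUnion
  intro e
  have h1 : MeasurableSet {x : Fin n → ℝ | k.1 < t.1} := MeasurableSet.const _
  have h2 : MeasurableSet {x : Fin n → ℝ |
      (S.place x k).1 = e.1 + 1 ∨ e.1 = (S.place x k).1 + 1} :=
    measurableSet_place_prop S k (fun d => d.1 = e.1 + 1 ∨ e.1 = d.1 + 1)
  have h3 : MeasurableSet {x : Fin n → ℝ | ∀ k' : Fin n, k'.1 < t.1 → S.place x k' ≠ e} := by
    have : {x : Fin n → ℝ | ∀ k' : Fin n, k'.1 < t.1 → S.place x k' ≠ e}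
        = ⋂ k' : Fin n, {x | k'.1 < t.1 → S.place x k' ≠ e} := by
      ext x; simp
    rw [this]
    apply MeasurableSet.iInter
    intro k'
    by_cases hk' : k'.1 < t.1
    · have : {x : Fin n → ℝ | k'.1 < t.1 → S.place x k' ≠ e}
          = {x : Fin n → ℝ | S.place x k' ≠ e} := by ext x; simp [hk']
      rw [this]
      exact measurableSet_place_prop S k' (fun d => d ≠ e)
    · have : {x : Fin n → ℝ | k'.1 < t.1 → S.place x k' ≠ e} = Set.univ := by
        ext x; simp [hk']
      rw [this]
      exact MeasurableSet.univ
  have h4 : MeasurableSet {x : Fin n → ℝ |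
      x t ∈ Set.Ioo (x k - 1/(4*(i:ℝ))) (x k + 1/(4*(i:ℝ)))} := by
    have : {x : Fin n → ℝ | x t ∈ Set.Ioo (x k - 1/(4*(i:ℝ))) (x k + 1/(4*(i:ℝ)))}
        = {x : Fin n → ℝ | x k - 1/(4*(i:ℝ)) < x t} ∩ {x | x t < x k + 1/(4*(i:ℝ))} := rfl
    rw [this]
    exact ((measurableSet_lt ((measurable_pi_apply k).sub measurable_const)
        (measurable_pi_apply t))).inter
      (measurableSet_lt (measurable_pi_apply t)
        ((measurable_pi_apply k).add measurable_const))
  have : {x : Fin n → ℝ | (k.1 < t.1 ∧ ((S.place x k).1 = e.1 + 1 ∨ e.1 = (S.place x k).1 + 1) ∧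
          (∀ k' : Fin n, k'.1 < t.1 → S.place x k' ≠ e)) ∧
         x t ∈ Set.Ioo (x k - 1/(4*(i:ℝ))) (x k + 1/(4*(i:ℝ)))}
      = ({x : Fin n → ℝ | k.1 < t.1} ∩ ({x : Fin n → ℝ |
      (S.place x k).1 = e.1 + 1 ∨ e.1 = (S.place x k).1 + 1} ∩ {x : Fin n → ℝ | ∀ k' : Fin n, k'.1 < t.1 → S.place x k' ≠ e}))
        ∩ {x : Fin n → ℝ | x t ∈ Set.Ioo (x k - 1/(4*(i:ℝ))) (x k + 1/(4*(i:ℝ)))} := by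
    ext x; simp only [Set.mem_setOf_eq, Set.mem_inter_iff]

  rw [this]
  exact (h1.inter (h2.inter h3)).inter h4

lemma measurableSet_badSetLast (S : OnlineStrategy n) (hn : 2 ≤ n) (i : ℕ) :
    MeasurableSet (badSetLast S hn i) := by
  have hlt : n - 1 < n := by omega
  apply MeasurableSet.iUnion
  intro k
  apply MeasurableSet.iUnion
  intro e
  have h1 : MeasurableSet {x : Fin n → ℝ | k.1 < n - 1} := MeasurableSet.const _
  have h2 : MeasurableSet {x : Fin n → ℝ | S.place x k = nbr hn e} :=
    measurableSet_place_prop S k (fun d => d = nbr hn e)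
  have h3 : MeasurableSet {x : Fin n → ℝ | ∀ k' : Fin n, k'.1 < n - 1 → S.place x k' ≠ e} := by
    have : {x : Fin n → ℝ | ∀ k' : Fin n, k'.1 < n - 1 → S.place x k' ≠ e}
        = ⋂ k' : Fin n, {x | k'.1 < n - 1 → S.place x k' ≠ e} := by
      ext x; simp
    rw [this]
    apply MeasurableSet.iInter
    intro k'
    by_cases hk' : k'.1 < n - 1
    · have : {x : Fin n → ℝ | k'.1 < n - 1 → S.place x k' ≠ e}
          = {x : Fin n → ℝ | S.place x k' ≠ e} := by ext x; simp [hk']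
      rw [this]
      exact measurableSet_place_prop S k' (fun d => d ≠ e)
    · have : {x : Fin n → ℝ | k'.1 < n - 1 → S.place x k' ≠ e} = Set.univ := by
        ext x; simp [hk']
      rw [this]
      exact MeasurableSet.univ
  have h4 : MeasurableSet {x : Fin n → ℝ |
      x ⟨n-1, by omega⟩ ∈ Set.Ioo (x k - 1/(4*(i:ℝ))) (x k + 1/(4*(i:ℝ)))} := by
    have : {x : Fin n → ℝ | x ⟨n-1, by omega⟩ ∈ Set.Ioo (x k - 1/(4*(i:ℝ))) (x k + 1/(4*(i:ℝ)))}
        = {x : Fin n → ℝ | x k - 1/(4*(i:ℝ)) < x ⟨n-1, by omega⟩}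
          ∩ {x | x ⟨n-1, by omega⟩ < x k + 1/(4*(i:ℝ))} := rfl
    rw [this]
    exact ((measurableSet_lt ((measurable_pi_apply k).sub measurable_const)
        (measurable_pi_apply (⟨n-1, hlt⟩ : Fin n)))).inter
      (measurableSet_lt (measurable_pi_apply (⟨n-1, hlt⟩ : Fin n))
        ((measurable_pi_apply k).add measurable_const))
  have : {x : Fin n → ℝ | (k.1 < n - 1 ∧ (∀ k' : Fin n, k'.1 < n - 1 → S.place x k' ≠ e) ∧
          S.place x k = nbr hn e) ∧
         x ⟨n-1, by omega⟩ ∈ Set.Ioo (x k - 1/(4*(i:ℝ))) (x k + 1/(4*(i:ℝ)))}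
      = ({x : Fin n → ℝ | k.1 < n - 1} ∩ ({x : Fin n → ℝ | ∀ k' : Fin n, k'.1 < n - 1 → S.place x k' ≠ e}
          ∩ {x : Fin n → ℝ | S.place x k = nbr hn e}))
        ∩ {x : Fin n → ℝ | x ⟨n-1, by omega⟩ ∈ Set.Ioo (x k - 1/(4*(i:ℝ))) (x k + 1/(4*(i:ℝ)))} := by
    ext x; simp only [Set.mem_setOf_eq, Set.mem_inter_iff]

  rw [this]
  exact (h1.inter (h3.inter h2)).inter h4

instance : IsProbabilityMeasure ((volume : Measure ℝ).restrict (Set.Icc 0 1)) :=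
  ⟨by simp [Real.volume_Icc]⟩

instance (n : ℕ) : IsProbabilityMeasure (uniformCube n) := by
  unfold uniformCube; infer_instance

/-- Conditioning lemma: if `U x` depends only on coordinates `< t` and always has volume `≤ ε`,
then the probability that `x t ∈ U x` is at most `ε`. -/
lemma uniformCube_cond_le (t : Fin n) (U : (Fin n → ℝ) → Set ℝ)
    (hdep : ∀ x y : Fin n → ℝ, (∀ k : Fin n, k.1 < t.1 → x k = y k) → U x = U y)
    (hUm : ∀ x, MeasurableSet (U x))
    (hmeas : MeasurableSet {x : Fin n → ℝ | x t ∈ U x})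
    (ε : ℝ≥0∞) (hvol : ∀ x, volume (U x) ≤ ε) :
    uniformCube n {x | x t ∈ U x} ≤ ε := by
  classical
  set μ0 : Measure ℝ := (volume : Measure ℝ).restrict (Set.Icc 0 1) with hμ0
  set p : Fin n → Prop := fun i => i ≠ t with hp
  set E : Set (Fin n → ℝ) := {x | x t ∈ U x} with hE
  set e := MeasurableEquiv.piEquivPiSubtypeProd (fun _ : Fin n => ℝ) p with he
  haveI hU : Unique {i : Fin n // ¬ p i} := by
    refine ⟨⟨⟨t, by simp [hp]⟩⟩, ?_⟩
    rintro ⟨a, ha⟩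
    simp only [hp, not_not] at ha
    subst ha
    rfl
  have hmp := measurePreserving_piEquivPiSubtypeProd (fun _ : Fin n => μ0) p
  have hEeq : E = ⇑e ⁻¹' (⇑e.symm ⁻¹' E) := by ext z; simp
  have hmeas2 : MeasurableSet (⇑e.symm ⁻¹' E) := e.symm.measurable hmeas
  have h1 : uniformCube n E
      = ((Measure.pi fun _ : {i : Fin n // p i} => μ0).prod
          (Measure.pi fun _ : {i : Fin n // ¬ p i} => μ0)) (⇑e.symm ⁻¹' E) :=
    (congrArg (uniformCube n) hEeq).trans (hmp.measure_preimage hmeas2.nullMeasurableSet)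
  have h2 : ((Measure.pi fun _ : {i : Fin n // p i} => μ0).prod
          (Measure.pi fun _ : {i : Fin n // ¬ p i} => μ0)) (⇑e.symm ⁻¹' E)
      = ∫⁻ a, (Measure.pi fun _ : {i : Fin n // ¬ p i} => μ0)
          (Prod.mk a ⁻¹' (⇑e.symm ⁻¹' E)) ∂(Measure.pi fun _ : {i : Fin n // p i} => μ0) :=
    Measure.prod_apply hmeas2
  have h3 : ∀ a : {i : Fin n // p i} → ℝ,
      (Measure.pi fun _ : {i : Fin n // ¬ p i} => μ0) (Prod.mk a ⁻¹' (⇑e.symm ⁻¹' E)) ≤ ε := by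
    intro a
    set x₀ : Fin n → ℝ := e.symm (a, fun _ => 0) with hx₀
    have hslice : Prod.mk a ⁻¹' (⇑e.symm ⁻¹' E)
        = (fun b : {i : Fin n // ¬ p i} → ℝ => b default) ⁻¹' (U x₀) := by
      ext b
      have hxt : (e.symm (a, b)) t = b default := by
        have h5 : (e.symm (a, b)) t = if h : p t then a ⟨t, h⟩ else b ⟨t, h⟩ := by
          rw [he, MeasurableEquiv.piEquivPiSubtypeProd_symm_apply]
        rw [h5, dif_neg (by simp [hp])]
        congr 1
        exact Subsingleton.elim _ _
      have hUeq : U (e.symm (a, b)) = U x₀ := by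
        apply hdep
        intro k hk
        have hpk : p k := by
          simp only [hp]
          intro h
          subst h
          omega
        have e1 : (e.symm (a, b)) k = a ⟨k, hpk⟩ := by
          have h6 : (e.symm (a, b)) k = if h : p k then a ⟨k, h⟩ else b ⟨k, h⟩ := by
            rw [he, MeasurableEquiv.piEquivPiSubtypeProd_symm_apply]
          rw [h6, dif_pos hpk]
        have e2 : x₀ k = a ⟨k, hpk⟩ := by
          have h6 : x₀ k = if h : p k then a ⟨k, h⟩ else (fun _ : {i : Fin n // ¬ p i} => (0:ℝ)) ⟨k, h⟩ := by
            rw [hx₀, he, MeasurableEquiv.piEquivPiSubtypeProd_symm_apply]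
          rw [h6, dif_pos hpk]
        rw [e1, e2]
      constructor
      · intro hb
        have : (e.symm (a, b)) ∈ E := hb
        rw [hE, Set.mem_setOf_eq, hxt, hUeq] at this
        exact this
      · intro hb
        show (e.symm (a, b)) ∈ E
        rw [hE, Set.mem_setOf_eq, hxt, hUeq]
        exact hb
    rw [hslice]
    have hset : ((fun b : {i : Fin n // ¬ p i} → ℝ => b default) ⁻¹' (U x₀))
        = Set.pi Set.univ (fun _ => U x₀) := by
      ext b
      constructor
      · intro hb i _
        rw [Unique.eq_default i]
        exact hb
      · intro hb
        exact hb default (Set.mem_univ _)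
    have h4 : (Measure.pi fun _ : {i : Fin n // ¬ p i} => μ0)
        ((fun b : {i : Fin n // ¬ p i} → ℝ => b default) ⁻¹' (U x₀)) = μ0 (U x₀) := by
      rw [hset, Measure.pi_pi, Fintype.prod_unique]
    rw [h4]
    calc μ0 (U x₀) ≤ volume (U x₀) := by
          rw [hμ0, Measure.restrict_apply (hUm x₀)]
          exact measure_mono Set.inter_subset_left
      _ ≤ ε := hvol x₀
  calc uniformCube n E = _ := h1
    _ = _ := h2
    _ ≤ ∫⁻ _, ε ∂(Measure.pi fun _ : {i : Fin n // p i} => μ0) := lintegral_mono h3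
    _ = ε := by rw [lintegral_const, measure_univ, mul_one]

lemma uniformCube_badSet_le (S : OnlineStrategy n) (i : ℕ) (t : Fin n) :
    uniformCube n (badSet S i t)
      ≤ (2 * (n - t.1) : ℕ) * ENNReal.ofReal (2 * (1/(4*(i:ℝ)))) := by
  classical
  set δ : ℝ := 1/(4*(i:ℝ)) with hδ
  set C : Fin n → Fin n → (Fin n → ℝ) → Prop := fun k e x =>
    (k.1 < t.1 ∧ ((S.place x k).1 = e.1 + 1 ∨ e.1 = (S.place x k).1 + 1) ∧
     (∀ k' : Fin n, k'.1 < t.1 → S.place x k' ≠ e)) with hC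
  set U : (Fin n → ℝ) → Set ℝ := fun x => ⋃ (k : Fin n) (e : Fin n),
    if C k e x then Set.Ioo (x k - δ) (x k + δ) else ∅ with hUdef
  have hbs : badSet S i t = {x | x t ∈ U x} := by
    ext x
    rw [mem_badSet_iff]
    simp only [hUdef, Set.mem_setOf_eq, Set.mem_iUnion]
    constructor
    · rintro ⟨k, e, hc, hm⟩
      exact ⟨k, e, by rw [if_pos hc]; exact hm⟩
    · rintro ⟨k, e, hm⟩
      by_cases hc : C k e x
      · refine ⟨k, e, hc, ?_⟩
        rwa [if_pos hc] at hm
      · rw [if_neg hc] at hm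
        exact absurd hm (Set.notMem_empty _)
  rw [hbs]
  apply uniformCube_cond_le t U
  · intro x y hagree
    have hplace : ∀ k' : Fin n, k'.1 < t.1 → S.place x k' = S.place y k' := by
      intro k' hk'
      apply S.online
      intro i' hi'
      exact hagree i' (lt_of_le_of_lt (Fin.le_def.mp hi') hk')
    apply Set.iUnion_congr; intro k
    apply Set.iUnion_congr; intro e
    by_cases hk : k.1 < t.1
    · have hxy : x k = y k := hagree k hk
      have hiff : C k e x ↔ C k e y := by
        simp only [hC]
        constructor
        · rintro ⟨h1, h2, h3⟩
          exact ⟨h1, by rw [← hplace k h1]; exact h2,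
            fun k' hk' hne => h3 k' hk' (by rw [hplace k' hk']; exact hne)⟩
        · rintro ⟨h1, h2, h3⟩
          exact ⟨h1, by rw [hplace k h1]; exact h2,
            fun k' hk' hne => h3 k' hk' (by rw [← hplace k' hk']; exact hne)⟩
      rw [if_congr hiff (by rw [hxy]) rfl]
    · rw [if_neg (fun hc => hk hc.1), if_neg (fun hc : C k e y => hk hc.1)]
  · intro x
    apply MeasurableSet.iUnion; intro k
    apply MeasurableSet.iUnion; intro e
    split_ifs
    exacts [measurableSet_Ioo, MeasurableSet.empty]
  · rw [← hbs]; exact measurableSet_badSet S i t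
  · intro x
    have hb1 : volume (U x) ≤ ∑ k : Fin n, ∑ e : Fin n,
        volume (if C k e x then Set.Ioo (x k - δ) (x k + δ) else ∅) := by
      refine le_trans (measure_iUnion_le _) ?_
      rw [tsum_fintype]
      apply Finset.sum_le_sum
      intro k _
      refine le_trans (measure_iUnion_le _) ?_
      rw [tsum_fintype]
    have hb2 : ∀ k e : Fin n, volume (if C k e x then Set.Ioo (x k - δ) (x k + δ) else ∅)
        ≤ if C k e x then ENNReal.ofReal (2*δ) else 0 := by
      intro k e
      split_ifs
      · rw [Real.volume_Ioo]
        apply le_of_eq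
        congr 1
        ring
      · simp
    set P2 := Finset.univ.filter (fun q : Fin n × Fin n => C q.1 q.2 x) with hP2
    have hb3 : ∑ k : Fin n, ∑ e : Fin n, (if C k e x then ENNReal.ofReal (2*δ) else 0)
        = P2.card * ENNReal.ofReal (2*δ) := by
      rw [← Finset.sum_product', Finset.univ_product_univ, ← Finset.sum_filter,
        Finset.sum_const, nsmul_eq_mul]
    have hcard : P2.card ≤ 2 * (n - t.1) := by
      have hsub : P2 ⊆ (Finset.univ.filter (fun e : Fin n =>
          ∀ k' : Fin n, k'.1 < t.1 → S.place x k' ≠ e)).biUnion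
          (fun e => (Finset.univ.filter (fun k : Fin n =>
            (S.place x k).1 = e.1 + 1 ∨ e.1 = (S.place x k).1 + 1)) ×ˢ {e}) := by
        rintro ⟨k, e⟩ hq
        obtain ⟨h1, h2, h3⟩ := (Finset.mem_filter.mp hq).2
        exact Finset.mem_biUnion.mpr ⟨e, Finset.mem_filter.mpr ⟨Finset.mem_univ _, h3⟩,
          Finset.mem_product.mpr ⟨Finset.mem_filter.mpr ⟨Finset.mem_univ _, h2⟩,
            Finset.mem_singleton_self e⟩⟩
      have hper : ∀ e : Fin n, ((Finset.univ.filter (fun k : Fin n =>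
            (S.place x k).1 = e.1 + 1 ∨ e.1 = (S.place x k).1 + 1)) ×ˢ ({e} : Finset (Fin n))).card ≤ 2 := by
        intro e
        rw [Finset.card_product, Finset.card_singleton, mul_one]
        have step1 : (Finset.univ.filter (fun k : Fin n =>
            (S.place x k).1 = e.1 + 1 ∨ e.1 = (S.place x k).1 + 1)).card
            ≤ (Finset.univ.filter (fun d : Fin n => d.1 = e.1 + 1 ∨ e.1 = d.1 + 1)).card := by
          apply Finset.card_le_card_of_injOn (S.place x)
          · intro k hk
            simp only [Finset.mem_coe, Finset.mem_filter, Finset.mem_univ, true_and] at hk ⊢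
            exact hk
          · intro a _ b _ hab
            exact S.inj x hab
        have step2 : (Finset.univ.filter (fun d : Fin n => d.1 = e.1 + 1 ∨ e.1 = d.1 + 1)).card ≤ 2 := by
          have hsteps : (Finset.univ.filter (fun d : Fin n => d.1 = e.1 + 1 ∨ e.1 = d.1 + 1)).card
              ≤ ({e.1 + 1, e.1 - 1} : Finset ℕ).card := by
            apply Finset.card_le_card_of_injOn Fin.val
            · intro d hd
              simp only [Finset.mem_coe, Finset.mem_filter, Finset.mem_univ, true_and] at hd
              simp only [Finset.mem_coe, Finset.mem_insert, Finset.mem_singleton]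
              omega
            · intro a _ b _ hab
              exact Fin.ext hab
          exact hsteps.trans ((Finset.card_insert_le _ _).trans (by simp))
        exact step1.trans step2
      have hEt : (Finset.univ.filter (fun e : Fin n =>
          ∀ k' : Fin n, k'.1 < t.1 → S.place x k' ≠ e)).card = n - t.1 := by
        have he : Finset.univ.filter (fun e : Fin n => ∀ k' : Fin n, k'.1 < t.1 → S.place x k' ≠ e)
            = Finset.univ \ ((Finset.univ.filter (fun k : Fin n => k.1 < t.1)).image (S.place x)) := by
          ext e
          constructor
          · intro hmem
            rw [Finset.mem_sdiff]
            refine ⟨Finset.mem_univ _, ?_⟩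
            intro him
            obtain ⟨k, hk, hpk⟩ := Finset.mem_image.mp him
            have hk2 : k.1 < t.1 := (Finset.mem_filter.mp hk).2
            exact (Finset.mem_filter.mp hmem).2 k hk2 hpk
          · intro hmem
            refine Finset.mem_filter.mpr ⟨Finset.mem_univ _, ?_⟩
            intro k' hk' hpk'
            exact (Finset.mem_sdiff.mp hmem).2
              (Finset.mem_image.mpr ⟨k', Finset.mem_filter.mpr ⟨Finset.mem_univ _, hk'⟩, hpk'⟩)
        rw [he, Finset.card_sdiff_of_subset (Finset.subset_univ _), Finset.card_univ, Fintype.card_fin,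
          Finset.card_image_of_injective _ (S.inj x), card_filter_lt t.1 (le_of_lt t.isLt)]
      calc P2.card ≤ _ := Finset.card_le_card hsub
        _ ≤ ∑ e ∈ Finset.univ.filter (fun e : Fin n =>
              ∀ k' : Fin n, k'.1 < t.1 → S.place x k' ≠ e),
              ((Finset.univ.filter (fun k : Fin n =>
                (S.place x k).1 = e.1 + 1 ∨ e.1 = (S.place x k).1 + 1)) ×ˢ ({e} : Finset (Fin n))).card :=
            Finset.card_biUnion_le
        _ ≤ ∑ _e ∈ Finset.univ.filter (fun e : Fin n =>
              ∀ k' : Fin n, k'.1 < t.1 → S.place x k' ≠ e), 2 :=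
            Finset.sum_le_sum (fun e _ => hper e)
        _ = 2 * (n - t.1) := by rw [Finset.sum_const, smul_eq_mul, hEt, mul_comm]
    calc volume (U x) ≤ _ := hb1
      _ ≤ ∑ k : Fin n, ∑ e : Fin n, (if C k e x then ENNReal.ofReal (2*δ) else 0) :=
          Finset.sum_le_sum (fun k _ => Finset.sum_le_sum (fun e _ => hb2 k e))
      _ = P2.card * ENNReal.ofReal (2*δ) := hb3
      _ ≤ (2 * (n - t.1) : ℕ) * ENNReal.ofReal (2*δ) := by
          exact mul_le_mul_left (Nat.cast_le.mpr hcard) _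

lemma uniformCube_badSetLast_le (S : OnlineStrategy n) (hn : 2 ≤ n) (i : ℕ) :
    uniformCube n (badSetLast S hn i) ≤ ENNReal.ofReal (2 * (1/(4*(i:ℝ)))) := by
  classical
  set δ : ℝ := 1/(4*(i:ℝ)) with hδ
  set t : Fin n := ⟨n - 1, by omega⟩ with ht
  set C : Fin n → Fin n → (Fin n → ℝ) → Prop := fun k e x =>
    (k.1 < n - 1 ∧ (∀ k' : Fin n, k'.1 < n - 1 → S.place x k' ≠ e) ∧
     S.place x k = nbr hn e) with hC
  set U : (Fin n → ℝ) → Set ℝ := fun x => ⋃ (k : Fin n) (e : Fin n),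
    if C k e x then Set.Ioo (x k - δ) (x k + δ) else ∅ with hUdef
  have hbs : badSetLast S hn i = {x | x t ∈ U x} := by
    ext x
    rw [badSetLast]
    simp only [hUdef, Set.mem_setOf_eq, Set.mem_iUnion]
    constructor
    · rintro ⟨k, e, hc, hm⟩
      exact ⟨k, e, by rw [if_pos hc]; exact hm⟩
    · rintro ⟨k, e, hm⟩
      by_cases hc : C k e x
      · refine ⟨k, e, hc, ?_⟩
        rwa [if_pos hc] at hm
      · rw [if_neg hc] at hm
        exact absurd hm (Set.notMem_empty _)
  rw [hbs]
  apply uniformCube_cond_le t U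
  · intro x y hagree
    have hagree' : ∀ k : Fin n, k.1 < n - 1 → x k = y k := fun k hk => hagree k hk
    have hplace : ∀ k' : Fin n, k'.1 < n - 1 → S.place x k' = S.place y k' := by
      intro k' hk'
      apply S.online
      intro i' hi'
      exact hagree' i' (lt_of_le_of_lt (Fin.le_def.mp hi') hk')
    apply Set.iUnion_congr; intro k
    apply Set.iUnion_congr; intro e
    by_cases hk : k.1 < n - 1
    · have hxy : x k = y k := hagree' k hk
      have hiff : C k e x ↔ C k e y := by
        simp only [hC]
        constructor
        · rintro ⟨h1, h2, h3⟩
          exact ⟨h1, fun k' hk' hne => h2 k' hk' (by rw [hplace k' hk']; exact hne),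
            by rw [← hplace k h1]; exact h3⟩
        · rintro ⟨h1, h2, h3⟩
          exact ⟨h1, fun k' hk' hne => h2 k' hk' (by rw [← hplace k' hk']; exact hne),
            by rw [hplace k h1]; exact h3⟩
      rw [if_congr hiff (by rw [hxy]) rfl]
    · rw [if_neg (fun hc => hk hc.1), if_neg (fun hc : C k e y => hk hc.1)]
  · intro x
    apply MeasurableSet.iUnion; intro k
    apply MeasurableSet.iUnion; intro e
    split_ifs
    exacts [measurableSet_Ioo, MeasurableSet.empty]
  · rw [← hbs]; exact measurableSet_badSetLast S hn i
  · intro x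
    have huniqe : ∀ e e' : Fin n, (∀ k' : Fin n, k'.1 < n - 1 → S.place x k' ≠ e) →
        (∀ k' : Fin n, k'.1 < n - 1 → S.place x k' ≠ e') → e = e' := by
      intro e e' he he'
      obtain ⟨m, hm⟩ := place_surj S x e
      obtain ⟨m', hm'⟩ := place_surj S x e'
      have h1 : ¬ m.1 < n - 1 := fun h => he m h hm
      have h2 : ¬ m'.1 < n - 1 := fun h => he' m' h hm'
      have hmm : m = m' := Fin.ext (by have := m.isLt; have := m'.isLt; omega)
      rw [← hm, ← hm', hmm]
    rcases Classical.em (∃ k0 e0 : Fin n, C k0 e0 x) with ⟨k0, e0, hc0⟩ | hnone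
    · have hsub : U x ⊆ Set.Ioo (x k0 - δ) (x k0 + δ) := by
        intro r hr
        simp only [hUdef, Set.mem_iUnion] at hr
        obtain ⟨k, e, hr⟩ := hr
        by_cases hc : C k e x
        · have hee : e = e0 := huniqe e e0 hc.2.1 hc0.2.1
          have hkk : k = k0 := by
            apply S.inj x
            rw [hc.2.2, hc0.2.2, hee]
          rw [if_pos hc] at hr
          rwa [hkk] at hr
        · rw [if_neg hc] at hr
          exact absurd hr (Set.notMem_empty _)
      calc volume (U x) ≤ volume (Set.Ioo (x k0 - δ) (x k0 + δ)) := measure_mono hsub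
        _ = ENNReal.ofReal (2 * δ) := by rw [Real.volume_Ioo]; congr 1; ring
        _ ≤ ENNReal.ofReal (2 * δ) := le_refl _
    · have hempty : U x = ∅ := by
        simp only [hUdef]
        apply Set.iUnion_eq_empty.mpr
        intro k
        apply Set.iUnion_eq_empty.mpr
        intro e
        rw [if_neg (fun hc => hnone ⟨k, e, hc⟩)]
      rw [hempty]
      simp

lemma enn_nat_mul_ofReal (a : ℕ) (r : ℝ) :
    (a : ℝ≥0∞) * ENNReal.ofReal r = ENNReal.ofReal (a * r) := by
  rw [← ENNReal.ofReal_natCast a, ← ENNReal.ofReal_mul (Nat.cast_nonneg a)]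

lemma key_integrated (S : OnlineStrategy n) (hn : 2 ≤ n) (i L : ℕ) (hi : 1 ≤ i)
    (hL1 : 1 ≤ L) (hLn : L ≤ n) (hLi : 8 * L ≤ i) :
    (L : ℝ≥0∞) ≤ 4 * ∑ j ∈ Finset.range (n-1),
      uniformCube n {x | 1/(4*(i:ℝ)) ≤ |strategyArr S x (j+1) - strategyArr S x j|} := by
  classical
  set μ := uniformCube n with hμ
  set B : ℕ → Set (Fin n → ℝ) := fun j =>
    {x | 1/(4*(i:ℝ)) ≤ |strategyArr S x (j+1) - strategyArr S x j|} with hB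
  set Tset := Finset.univ.filter (fun t : Fin n => n - L ≤ t.1) with hT
  have hTcard : Tset.card = L := by rw [hT, card_filter_ge (n-L) (by omega)]; omega
  have hmeasB : ∀ j, MeasurableSet (B j) := fun j => measurableSet_bigSet S i j
  have hpt : ∀ x : Fin n → ℝ, (L : ℝ≥0∞) ≤
      2 * ∑ j ∈ Finset.range (n-1), (B j).indicator (fun _ => (1:ℝ≥0∞)) x
      + 4 * ∑ t ∈ Tset, (badSet S i t).indicator (fun _ => (1:ℝ≥0∞)) x := by
    intro x
    have hkey := key_count S hn i L hLn x
    have e1 : (((Finset.range (n-1)).filter (fun j =>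
        1/(4*(i:ℝ)) ≤ |strategyArr S x (j+1) - strategyArr S x j|)).card : ℝ≥0∞)
        = ∑ j ∈ Finset.range (n-1), (B j).indicator (fun _ => (1:ℝ≥0∞)) x := by
      rw [Finset.card_filter, Nat.cast_sum]
      apply Finset.sum_congr rfl
      intro j _
      by_cases h : 1/(4*(i:ℝ)) ≤ |strategyArr S x (j+1) - strategyArr S x j|
      · rw [if_pos h, Set.indicator_of_mem (show x ∈ B j from h)]
        simp
      · rw [if_neg h, Set.indicator_of_notMem (show x ∉ B j from h)]
        simp
    have e2 : ((Finset.univ.filter (fun t : Fin n => n - L ≤ t.1 ∧ x ∈ badSet S i t)).card : ℝ≥0∞)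
        = ∑ t ∈ Tset, (badSet S i t).indicator (fun _ => (1:ℝ≥0∞)) x := by
      have hff : (Finset.univ.filter (fun t : Fin n => n - L ≤ t.1 ∧ x ∈ badSet S i t))
          = Tset.filter (fun t => x ∈ badSet S i t) := by
        rw [hT, Finset.filter_filter]
      rw [hff, Finset.card_filter, Nat.cast_sum]
      apply Finset.sum_congr rfl
      intro t _
      by_cases h : x ∈ badSet S i t
      · rw [if_pos h, Set.indicator_of_mem h]
        simp
      · rw [if_neg h, Set.indicator_of_notMem h]
        simp
    calc (L:ℝ≥0∞) ≤ ((2 * ((Finset.range (n-1)).filter (fun j =>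
            1/(4*(i:ℝ)) ≤ |strategyArr S x (j+1) - strategyArr S x j|)).card
          + 4 * (Finset.univ.filter (fun t : Fin n => n - L ≤ t.1 ∧ x ∈ badSet S i t)).card : ℕ) : ℝ≥0∞) :=
        Nat.cast_le.mpr hkey
      _ = 2 * (((Finset.range (n-1)).filter (fun j =>
            1/(4*(i:ℝ)) ≤ |strategyArr S x (j+1) - strategyArr S x j|)).card : ℝ≥0∞)
          + 4 * ((Finset.univ.filter (fun t : Fin n => n - L ≤ t.1 ∧ x ∈ badSet S i t)).card : ℝ≥0∞) := by
        push_cast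
        ring
      _ = _ := by rw [e1, e2]
  -- integrate the pointwise bound
  have hintB : ∫⁻ x, (∑ j ∈ Finset.range (n-1), (B j).indicator (fun _ => (1:ℝ≥0∞)) x) ∂μ
      = ∑ j ∈ Finset.range (n-1), μ (B j) := by
    rw [lintegral_finset_sum]
    · apply Finset.sum_congr rfl
      intro j _
      rw [lintegral_indicator (hmeasB j)]
      simp
    · intro j _
      exact (measurable_const.indicator (hmeasB j))
  have hintT : ∫⁻ x, (∑ t ∈ Tset, (badSet S i t).indicator (fun _ => (1:ℝ≥0∞)) x) ∂μ
      = ∑ t ∈ Tset, μ (badSet S i t) := by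
    rw [lintegral_finset_sum]
    · apply Finset.sum_congr rfl
      intro t _
      rw [lintegral_indicator (measurableSet_badSet S i t)]
      simp
    · intro t _
      exact (measurable_const.indicator (measurableSet_badSet S i t))
  have hstep : (L:ℝ≥0∞) ≤ 2 * ∑ j ∈ Finset.range (n-1), μ (B j)
      + 4 * ∑ t ∈ Tset, μ (badSet S i t) := by
    have h1 : (L:ℝ≥0∞) = ∫⁻ _x, (L:ℝ≥0∞) ∂μ := by
      rw [lintegral_const, measure_univ, mul_one]
    have hmeas1 : Measurable fun x : Fin n → ℝ =>
        ∑ j ∈ Finset.range (n-1), (B j).indicator (fun _ => (1:ℝ≥0∞)) x :=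
      Finset.measurable_sum _ (fun j _ => measurable_const.indicator (hmeasB j))
    have hmeas2 : Measurable fun x : Fin n → ℝ =>
        ∑ t ∈ Tset, (badSet S i t).indicator (fun _ => (1:ℝ≥0∞)) x :=
      Finset.measurable_sum _ (fun t _ => measurable_const.indicator (measurableSet_badSet S i t))
    have hadd : ∫⁻ x, (2 * ∑ j ∈ Finset.range (n-1), (B j).indicator (fun _ => (1:ℝ≥0∞)) x
        + 4 * ∑ t ∈ Tset, (badSet S i t).indicator (fun _ => (1:ℝ≥0∞)) x) ∂μ
        = 2 * ∑ j ∈ Finset.range (n-1), μ (B j) + 4 * ∑ t ∈ Tset, μ (badSet S i t) := by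
      rw [lintegral_add_left (hmeas1.const_mul 2), lintegral_const_mul 2 hmeas1,
        lintegral_const_mul 4 hmeas2, hintB, hintT]
    rw [h1]
    exact (lintegral_mono hpt).trans (le_of_eq hadd)
  -- bound the bad part
  have hbad : 4 * ∑ t ∈ Tset, μ (badSet S i t) ≤ (L:ℝ≥0∞)/2 := by
    have hsum : ∑ t ∈ Tset, μ (badSet S i t)
        ≤ (L:ℝ≥0∞) * (((2*L:ℕ):ℝ≥0∞) * ENNReal.ofReal (2*(1/(4*(i:ℝ))))) := by
      calc ∑ t ∈ Tset, μ (badSet S i t)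
          ≤ ∑ _t ∈ Tset, (((2*L:ℕ):ℝ≥0∞) * ENNReal.ofReal (2*(1/(4*(i:ℝ))))) := by
            apply Finset.sum_le_sum
            intro t htm
            refine (uniformCube_badSet_le S i t).trans ?_
            have hle : n - t.1 ≤ L := by
              have := (Finset.mem_filter.mp htm).2
              omega
            exact mul_le_mul_left (Nat.cast_le.mpr (by omega)) _
        _ = Tset.card * (((2*L:ℕ):ℝ≥0∞) * ENNReal.ofReal (2*(1/(4*(i:ℝ))))) := by
            rw [Finset.sum_const, nsmul_eq_mul]
        _ = (L:ℝ≥0∞) * (((2*L:ℕ):ℝ≥0∞) * ENNReal.ofReal (2*(1/(4*(i:ℝ))))) := by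
            rw [hTcard]
    refine le_trans (mul_le_mul_right hsum 4) ?_
    have hcollect : (4:ℝ≥0∞) * ((L:ℝ≥0∞) * (((2*L:ℕ):ℝ≥0∞) * ENNReal.ofReal (2*(1/(4*(i:ℝ))))))
        = ((4*(L*(2*L)):ℕ):ℝ≥0∞) * ENNReal.ofReal (2*(1/(4*(i:ℝ)))) := by
      push_cast
      ring
    rw [hcollect, enn_nat_mul_ofReal]
    have hir : (0:ℝ) < i := by
      have : (1:ℝ) ≤ i := by exact_mod_cast hi
      linarith
    have hreal : ((4*(L*(2*L)):ℕ):ℝ) * (2*(1/(4*(i:ℝ)))) ≤ (L:ℝ)/2 := by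
      have h8 : (8*(L:ℝ)) ≤ i := by exact_mod_cast hLi
      have hL0 : (0:ℝ) ≤ L := Nat.cast_nonneg L
      have hexp : ((4*(L*(2*L)):ℕ):ℝ) * (2*(1/(4*(i:ℝ)))) = 4*(L:ℝ)*(L:ℝ)/(i:ℝ) := by
        push_cast
        field_simp
        ring
      rw [hexp, div_le_div_iff₀ hir two_pos]
      nlinarith [mul_le_mul_of_nonneg_left h8 hL0]
    refine le_trans (ENNReal.ofReal_le_ofReal hreal) ?_
    rw [ENNReal.ofReal_div_of_pos two_pos, ENNReal.ofReal_natCast, ENNReal.ofReal_ofNat]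
  -- conclude
  have hfinal : (L:ℝ≥0∞) ≤ 2 * ∑ j ∈ Finset.range (n-1), μ (B j) + (L:ℝ≥0∞)/2 :=
    hstep.trans (add_le_add_right hbad _)
  have hhalf : (L:ℝ≥0∞)/2 ≤ 2 * ∑ j ∈ Finset.range (n-1), μ (B j) := by
    rw [← ENNReal.sub_half (show (L:ℝ≥0∞) ≠ ⊤ from ENNReal.natCast_ne_top L)]
    exact tsub_le_iff_right.mpr hfinal
  calc (L:ℝ≥0∞) = 2 * ((L:ℝ≥0∞)/2) := by
        rw [ENNReal.mul_div_cancel' (by norm_num) (by norm_num)]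
    _ ≤ 2 * (2 * ∑ j ∈ Finset.range (n-1), μ (B j)) := mul_le_mul_right hhalf 2
    _ = 4 * ∑ j ∈ Finset.range (n-1), μ (B j) := by ring

lemma last_integrated (S : OnlineStrategy n) (hn : 2 ≤ n) (i : ℕ) (hi : 1 ≤ i) :
    (1 : ℝ≥0∞) ≤ 2 * ∑ j ∈ Finset.range (n-1),
      uniformCube n {x | 1/(4*(i:ℝ)) ≤ |strategyArr S x (j+1) - strategyArr S x j|} := by
  classical
  set μ := uniformCube n with hμ
  set B : ℕ → Set (Fin n → ℝ) := fun j =>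
    {x | 1/(4*(i:ℝ)) ≤ |strategyArr S x (j+1) - strategyArr S x j|} with hB
  have hmeasB : ∀ j, MeasurableSet (B j) := fun j => measurableSet_bigSet S i j
  have hpt : ∀ x : Fin n → ℝ, (1 : ℝ≥0∞) ≤
      ∑ j ∈ Finset.range (n-1), (B j).indicator (fun _ => (1:ℝ≥0∞)) x
      + (badSetLast S hn i).indicator (fun _ => (1:ℝ≥0∞)) x := by
    intro x
    by_cases hx : x ∈ badSetLast S hn i
    · calc (1:ℝ≥0∞) = (badSetLast S hn i).indicator (fun _ => (1:ℝ≥0∞)) x := by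
            rw [Set.indicator_of_mem hx]
        _ ≤ _ := le_add_self
    · obtain ⟨j₀, hj₀r, hj₀⟩ := last_count S hn i x hx
      calc (1:ℝ≥0∞) = (B j₀).indicator (fun _ => (1:ℝ≥0∞)) x := by
            rw [Set.indicator_of_mem (show x ∈ B j₀ from hj₀)]
        _ ≤ ∑ j ∈ Finset.range (n-1), (B j).indicator (fun _ => (1:ℝ≥0∞)) x :=
            Finset.single_le_sum (f := fun j => (B j).indicator (fun _ => (1:ℝ≥0∞)) x)
              (fun j _ => zero_le) hj₀r
        _ ≤ _ := le_add_right (le_refl _)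
  have hintB : ∫⁻ x, (∑ j ∈ Finset.range (n-1), (B j).indicator (fun _ => (1:ℝ≥0∞)) x) ∂μ
      = ∑ j ∈ Finset.range (n-1), μ (B j) := by
    rw [lintegral_finset_sum]
    · apply Finset.sum_congr rfl
      intro j _
      rw [lintegral_indicator (hmeasB j)]
      simp
    · intro j _
      exact (measurable_const.indicator (hmeasB j))
  have hstep : (1:ℝ≥0∞) ≤ ∑ j ∈ Finset.range (n-1), μ (B j) + μ (badSetLast S hn i) := by
    have h1 : (1:ℝ≥0∞) = ∫⁻ _x, (1:ℝ≥0∞) ∂μ := by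
      rw [lintegral_const, measure_univ, mul_one]
    rw [h1]
    refine le_trans (lintegral_mono hpt) ?_
    rw [lintegral_add_left, hintB, lintegral_indicator (measurableSet_badSetLast S hn i)]
    · simp
    · apply Finset.measurable_sum
      intro j _
      exact (measurable_const.indicator (hmeasB j))
  have hbadb : μ (badSetLast S hn i) ≤ 2⁻¹ := by
    refine (uniformCube_badSetLast_le S hn i).trans ?_
    have hir : (1:ℝ) ≤ i := by exact_mod_cast hi
    have hreal : 2*(1/(4*(i:ℝ))) ≤ 1/2 := by
      have h4i : (0:ℝ) < 4*(i:ℝ) := by linarith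
      have hrw : 2*(1/(4*(i:ℝ))) = 2/(4*(i:ℝ)) := by ring
      rw [hrw, div_le_div_iff₀ h4i two_pos]
      linarith
    refine le_trans (ENNReal.ofReal_le_ofReal hreal) ?_
    rw [ENNReal.ofReal_div_of_pos two_pos, ENNReal.ofReal_one, ENNReal.ofReal_ofNat, one_div]
  have hfinal : (1:ℝ≥0∞) ≤ ∑ j ∈ Finset.range (n-1), μ (B j) + 2⁻¹ :=
    hstep.trans (add_le_add_right hbadb _)
  have hhalf : (2:ℝ≥0∞)⁻¹ ≤ ∑ j ∈ Finset.range (n-1), μ (B j) := by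
    have h12 : (1:ℝ≥0∞) - 2⁻¹ = 2⁻¹ := by
      rw [← one_div, ← ENNReal.sub_half (by norm_num)]
      norm_num
    rw [← h12]
    exact tsub_le_iff_right.mpr hfinal
  calc (1:ℝ≥0∞) = 2 * 2⁻¹ := by
        rw [ENNReal.mul_inv_cancel (by norm_num) (by norm_num)]
    _ ≤ 2 * ∑ j ∈ Finset.range (n-1), μ (B j) := mul_le_mul_right hhalf 2

end OSP
instance (m : ℕ) : SFinite (uniformFin m) := by
  unfold uniformFin
  infer_instance
namespace OSP

lemma prod_measure_eq (S : OnlineStrategy n) (hn : 2 ≤ n) (i : ℕ) :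
    ((uniformCube n).prod (uniformFin (n - 1)))
        {p : (Fin n → ℝ) × Fin (n-1) | 1 / (4 * (i : ℝ)) ≤
          |strategyArr S p.1 ((p.2 : ℕ) + 1) - strategyArr S p.1 (p.2 : ℕ)|}
      = (((n-1:ℕ)):ℝ≥0∞)⁻¹ * ∑ j ∈ Finset.range (n-1),
          uniformCube n {x | 1/(4*(i:ℝ)) ≤ |strategyArr S x (j+1) - strategyArr S x j|} := by
  classical
  set B : ℕ → Set (Fin n → ℝ) := fun j =>
    {x | 1/(4*(i:ℝ)) ≤ |strategyArr S x (j+1) - strategyArr S x j|} with hB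
  have hset : {p : (Fin n → ℝ) × Fin (n-1) | 1 / (4 * (i : ℝ)) ≤
          |strategyArr S p.1 ((p.2 : ℕ) + 1) - strategyArr S p.1 (p.2 : ℕ)|}
      = ⋃ j : Fin (n-1), (B j.1) ×ˢ ({j} : Set (Fin (n-1))) := by
    ext ⟨x, j⟩
    simp only [Set.mem_setOf_eq, Set.mem_iUnion, Set.mem_prod, Set.mem_singleton_iff]
    constructor
    · intro h
      exact ⟨j, h, rfl⟩
    · rintro ⟨j', hj', rfl⟩
      exact hj'
  rw [hset, measure_iUnion ?_ ?_]
  · rw [tsum_fintype]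
    have hterm : ∀ j : Fin (n-1), ((uniformCube n).prod (uniformFin (n-1))) ((B j.1) ×ˢ ({j} : Set (Fin (n-1))))
        = uniformCube n (B j.1) * ((n-1:ℕ):ℝ≥0∞)⁻¹ := by
      intro j
      rw [Measure.prod_prod]
      congr 1
      show uniformFin (n-1) {j} = _
      rw [uniformFin, Measure.smul_apply, Measure.count_singleton, smul_eq_mul, mul_one]
    rw [Finset.sum_congr rfl (fun j _ => hterm j), ← Finset.sum_mul, mul_comm]
    congr 1
    exact (Fin.sum_univ_eq_sum_range (fun j => uniformCube n (B j)) (n-1))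
  · intro a b hab
    simp only [Function.onFun]
    apply Set.disjoint_left.mpr
    rintro ⟨x, j⟩ ⟨_, hj1⟩ ⟨_, hj2⟩
    exact hab (by rw [← hj1, ← hj2])
  · intro j
    exact (measurableSet_bigSet S i j.1).prod (measurableSet_singleton j)

end OSP

/-- For a uniformly random adjacent pair `(j, j+1)` and a random input: with
probability `Ω(i/n)`, the final contents of cells `j` and `j+1` differ by at
least `1/(4i)`. -/
theorem adjacent_pair_gap_prob :
    ∃ c : ℝ, 0 < c ∧ ∀ n : ℕ, 2 ≤ n → ∀ S : OnlineStrategy n, ∀ i : ℕ, 1 ≤ i → i ≤ n →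
      ENNReal.ofReal (c * (i : ℝ) / (n : ℝ)) ≤
        ((uniformCube n).prod (uniformFin (n - 1)))
          {p | 1 / (4 * (i : ℝ)) ≤
            |strategyArr S p.1 ((p.2 : ℕ) + 1) - strategyArr S p.1 (p.2 : ℕ)|} := by
  refine ⟨1/64, by norm_num, ?_⟩
  intro n hn S i hi1 hin
  rw [OSP.prod_measure_eq S hn i]
  set Sb := ∑ j ∈ Finset.range (n-1),
    uniformCube n {x | 1/(4*(i:ℝ)) ≤ |strategyArr S x (j+1) - strategyArr S x j|} with hSb
  have hkey : (i:ℝ≥0∞) ≤ 64 * Sb := by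
    by_cases h8 : i < 8
    · have h1 := OSP.last_integrated S hn i hi1
      calc (i:ℝ≥0∞) ≤ ((8:ℕ):ℝ≥0∞) := Nat.cast_le.mpr (by omega)
        _ = 8 * 1 := by norm_num
        _ ≤ 8 * (2 * Sb) := mul_le_mul_right h1 8
        _ = 16 * Sb := by ring
        _ ≤ 64 * Sb := mul_le_mul_left (by norm_num) _
    · push_neg at h8
      set L := i / 8 with hL
      have hL1 : 1 ≤ L := by omega
      have hLn : L ≤ n := le_trans (Nat.div_le_self i 8) hin
      have hLi : 8 * L ≤ i := by omega
      have h16 : i ≤ 16 * L := by omega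
      have h2 := OSP.key_integrated S hn i L hi1 hL1 hLn hLi
      calc (i:ℝ≥0∞) ≤ ((16*L:ℕ):ℝ≥0∞) := Nat.cast_le.mpr h16
        _ = 16 * (L:ℝ≥0∞) := by push_cast; ring
        _ ≤ 16 * (4 * Sb) := mul_le_mul_right h2 16
        _ = 64 * Sb := by ring
  have hofr : ENNReal.ofReal (1/64 * (i:ℝ) / (n:ℝ)) = (i:ℝ≥0∞) / ((64*n:ℕ):ℝ≥0∞) := by
    have hnpos : (0:ℝ) < n := by
      have : (2:ℝ) ≤ n := by exact_mod_cast hn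
      linarith
    have hre : 1/64 * (i:ℝ) / (n:ℝ) = ((i:ℕ):ℝ) / (((64*n:ℕ)):ℝ) := by push_cast; ring
    rw [hre, ENNReal.ofReal_div_of_pos (by push_cast; linarith), ENNReal.ofReal_natCast,
      ENNReal.ofReal_natCast]
  rw [hofr]
  have hb0 : ((64*n:ℕ):ℝ≥0∞) ≠ 0 := by
    simp only [ne_eq, Nat.cast_eq_zero]
    omega
  rw [ENNReal.div_le_iff_le_mul (Or.inl hb0) (Or.inl (ENNReal.natCast_ne_top _))]
  refine hkey.trans ?_
  have hmono : (1:ℝ≥0∞) ≤ ((n-1:ℕ):ℝ≥0∞)⁻¹ * ((n:ℕ):ℝ≥0∞) := by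
    have hne0 : ((n-1:ℕ):ℝ≥0∞) ≠ 0 := by
      simp only [ne_eq, Nat.cast_eq_zero]
      omega
    have hcanc : ((n-1:ℕ):ℝ≥0∞)⁻¹ * ((n-1:ℕ):ℝ≥0∞) = 1 :=
      ENNReal.inv_mul_cancel hne0 (ENNReal.natCast_ne_top _)
    calc (1:ℝ≥0∞) = ((n-1:ℕ):ℝ≥0∞)⁻¹ * ((n-1:ℕ):ℝ≥0∞) := hcanc.symm
      _ ≤ _ := mul_le_mul_right (Nat.cast_le.mpr (by omega)) _
  calc 64 * Sb = (64 * Sb) * 1 := by rw [mul_one]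
    _ ≤ (64 * Sb) * (((n-1:ℕ):ℝ≥0∞)⁻¹ * ((n:ℕ):ℝ≥0∞)) := mul_le_mul_right hmono _
    _ = (((n-1:ℕ):ℝ≥0∞))⁻¹ * Sb * ((64*n:ℕ):ℝ≥0∞) := by push_cast; ring
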